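/- Let γ̂ ∈ [0,1) and let c⁰ ∈ ℝ^S have nonnegative entries summing to 1. Then the iterates c^{k+1} = Y_γ̂ c^k converge (entrywise, as k → ∞) to the ratio vector d̂_π/d_μ with entries d̂_π(s)/d_μ(s). -/

import Mathlib

open Matrix Finset Filter Topology

/-- Convergence of the discounted COP operator iterates to `d̂π/dμ` (Theorem 7). -/
theorem discounted_cop_convergence
    {S : Type*} [Fintype S] [Nonempty S] [DecidableEq S]
    -- `P` is a row-stochastic matrix (entry `P s s'` is `P(s' | s)`)
    (P : Matrix S S ℝ)
    (hP0 : ∀ s s', 0 ≤ P s s') (hP1 : ∀ s, ∑ s', P s s' = 1)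
    -- `dμ` is a strictly positive probability vector
    (dμ : S → ℝ) (hdμpos : ∀ s, 0 < dμ s) (hdμsum : ∑ s, dμ s = 1)
    -- the discount factor
    (γ : ℝ) (hγ0 : 0 ≤ γ) (hγ1 : γ < 1)
    -- `B` is the inverse of `I - γ̂ Pᵀ`
    (B : Matrix S S ℝ)
    (hB1 : (1 - γ • Pᵀ) * B = 1) (hB2 : B * (1 - γ • Pᵀ) = 1)
    -- `d̂π = (1-γ̂)(I - γ̂ Pᵀ)⁻¹ dμ`
    (dhat : S → ℝ) (hdhat : dhat = (1 - γ) • (B *ᵥ dμ))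
    -- the discounted COP operator `Y_γ̂ c = γ̂ Y c + (1-γ̂) e`,
    -- where `Y = D_{dμ}⁻¹ Pᵀ D_{dμ}` and `e` is the all-ones vector
    (Yγ : (S → ℝ) → (S → ℝ))
    (hYγ : ∀ c, Yγ c =
      γ • ((Matrix.diagonal (fun s => (dμ s)⁻¹) * Pᵀ * Matrix.diagonal dμ) *ᵥ c)
        + (1 - γ) • (fun _ => (1 : ℝ)))
    -- `c⁰` has nonnegative entries summing to 1, and `c^{k+1} = Y_γ̂ c^k`
    (c0 : S → ℝ) (hc00 : ∀ s, 0 ≤ c0 s) (hc0sum : ∑ s, c0 s = 1)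
    (c : ℕ → S → ℝ) (hc0' : c 0 = c0) (hcsucc : ∀ k, c (k + 1) = Yγ (c k)) :
    ∀ s, Tendsto (fun k => c k s) atTop (𝓝 (dhat s / dμ s)) := by
  have hdne : ∀ s, dμ s ≠ 0 := fun s => (hdμpos s).ne'
  -- fixed point equation for dhat
  have hfix : ∀ s, γ * (∑ s', Pᵀ s s' * dhat s') = dhat s - (1 - γ) * dμ s := by
    have h : (1 - γ • Pᵀ) *ᵥ dhat = (1 - γ) • dμ := by
      rw [hdhat, Matrix.mulVec_smul, Matrix.mulVec_mulVec, hB1, Matrix.one_mulVec]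
    rw [Matrix.sub_mulVec, Matrix.smul_mulVec, Matrix.one_mulVec] at h
    intro s
    have h2 := congrFun h s
    simp only [Pi.sub_apply, Pi.smul_apply, smul_eq_mul, Matrix.mulVec, dotProduct] at h2
    linarith
  -- the error sequence (weighted by dμ)
  set g : ℕ → S → ℝ := fun k s => dμ s * c k s - dhat s with hg
  have hApp : ∀ (v : S → ℝ) s,
      ((Matrix.diagonal (fun s => (dμ s)⁻¹) * Pᵀ * Matrix.diagonal dμ) *ᵥ v) s
        = (dμ s)⁻¹ * ∑ s', Pᵀ s s' * (dμ s' * v s') := by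
    intro v s
    rw [← Matrix.mulVec_mulVec, ← Matrix.mulVec_mulVec, Matrix.mulVec_diagonal]
    congr 1
    refine Finset.sum_congr rfl fun x _ => ?_
    congr 1
    simp [Matrix.mulVec, dotProduct, Matrix.diagonal_apply, ite_mul, Finset.sum_ite_eq]
  have hrec : ∀ k s, g (k + 1) s = γ * ∑ s', Pᵀ s s' * g k s' := by
    intro k s
    have hck : c (k + 1) s = γ * ((dμ s)⁻¹ * ∑ s', Pᵀ s s' * (dμ s' * c k s')) + (1 - γ) := by
      rw [hcsucc k, hYγ]
      simp only [Pi.add_apply, Pi.smul_apply, smul_eq_mul, hApp, mul_one]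
    have hsum : ∑ s', Pᵀ s s' * g k s'
        = (∑ s', Pᵀ s s' * (dμ s' * c k s')) - ∑ s', Pᵀ s s' * dhat s' := by
      rw [← Finset.sum_sub_distrib]
      exact Finset.sum_congr rfl fun s' _ => by simp [hg]; ring
    have hfx := hfix s
    set T := ∑ s', Pᵀ s s' * (dμ s' * c k s') with hT
    have hcancel : dμ s * (γ * ((dμ s)⁻¹ * T)) = γ * T := by
      rw [show γ * ((dμ s)⁻¹ * T) = (dμ s)⁻¹ * (γ * T) by ring, ← mul_assoc,
        mul_inv_cancel₀ (hdne s), one_mul]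
    simp only [hg]
    rw [hck, hsum]
    have expand : dμ s * (γ * ((dμ s)⁻¹ * T) + (1 - γ)) - dhat s
        = γ * T + (1 - γ) * dμ s - dhat s := by
      rw [mul_add, hcancel]; ring
    rw [expand]
    rw [mul_sub]
    linarith
  -- ℓ¹ norm decay
  have hnorm : ∀ k, ∑ s, |g k s| ≤ γ ^ k * ∑ s, |g 0 s| := by
    intro k
    induction k with
    | zero => simp
    | succ k ih =>
      have step : ∑ s, |g (k + 1) s| ≤ γ * ∑ s, |g k s| := by
        calc ∑ s, |g (k + 1) s| ≤ ∑ s, γ * ∑ s', Pᵀ s s' * |g k s'| := by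
              refine Finset.sum_le_sum fun s _ => ?_
              rw [hrec k s, abs_mul, abs_of_nonneg hγ0]
              refine mul_le_mul_of_nonneg_left ?_ hγ0
              refine le_trans (Finset.abs_sum_le_sum_abs _ _) ?_
              refine Finset.sum_le_sum fun s' _ => ?_
              rw [abs_mul, abs_of_nonneg (show (0:ℝ) ≤ Pᵀ s s' from hP0 s' s)]
          _ = γ * ∑ s', (∑ s, Pᵀ s s') * |g k s'| := by
              rw [← Finset.mul_sum, Finset.sum_comm]
              simp [Finset.sum_mul]
          _ = γ * ∑ s', |g k s'| := by
              congr 1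
              refine Finset.sum_congr rfl fun s' _ => ?_
              have : ∑ s, Pᵀ s s' = 1 := by
                simpa [Matrix.transpose_apply] using hP1 s'
              rw [this, one_mul]
      calc ∑ s, |g (k + 1) s| ≤ γ * ∑ s, |g k s| := step
        _ ≤ γ * (γ ^ k * ∑ s, |g 0 s|) := by
              exact mul_le_mul_of_nonneg_left ih hγ0
        _ = γ ^ (k + 1) * ∑ s, |g 0 s| := by ring
  -- conclude
  intro s
  have hg0 : Tendsto (fun k => g k s) atTop (𝓝 0) := by
    have habs : Tendsto (fun k => |g k s|) atTop (𝓝 0) := by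
      have hγk : Tendsto (fun k => γ ^ k * ∑ t, |g 0 t|) atTop (𝓝 0) := by
        simpa using (tendsto_pow_atTop_nhds_zero_of_lt_one hγ0 hγ1).mul_const (∑ t, |g 0 t|)
      refine squeeze_zero (fun k => abs_nonneg _) (fun k => ?_) hγk
      refine le_trans ?_ (hnorm k)
      exact Finset.single_le_sum (fun t _ => abs_nonneg (g k t)) (Finset.mem_univ s)
    exact tendsto_zero_iff_abs_tendsto_zero (fun k => g k s) |>.mpr habs
  have hc : ∀ k, c k s = g k s / dμ s + dhat s / dμ s := by
    intro k
    simp only [hg]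
    rw [← add_div, sub_add_cancel, mul_div_cancel_left₀ _ (hdne s)]
  have : Tendsto (fun k => g k s / dμ s + dhat s / dμ s) atTop (𝓝 (dhat s / dμ s)) := by
    have := (hg0.div_const (dμ s)).add_const (dhat s / dμ s)
    simpa using this
  simpa only [← hc] using this
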